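/- Define γ : [0,1] → ℝ² by γ(t) = (2πt, 0) for t ∈ [0,1/2) and γ(t) = (π, π − 2πt) for t ∈ [1/2,1]. Then γ is a path from (0,0) to (π,−π), and for every t ∈ [0,1] the point γ(t) lies in A₁ ∪ B₁ ∪ A₂, i.e., Re φ(γ(t)) ≥ 1/10, or Re φ(γ(t)) ≤ −1/10, or Im φ(γ(t)) ≥ 1/10. -/

import Mathlib

open Real

/-- The function `φ(x,y) = (1/3)(e^{ix} + e^{iy} + e^{i(x+y)})`. -/
noncomputable def phi : ℝ × ℝ → ℂ := fun p =>
  (1 / 3) * (Complex.exp (Complex.I * p.1) + Complex.exp (Complex.I * p.2) +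
    Complex.exp (Complex.I * (p.1 + p.2)))

/-- `A₁ = {(x,y) ∈ [−π,π]² : Re φ(x,y) ≥ 1/10}`. -/
noncomputable def A1 : Set (ℝ × ℝ) :=
  {p | p ∈ Set.Icc (-π) π ×ˢ Set.Icc (-π) π ∧ (phi p).re ≥ 1 / 10}

/-- `B₁ = {(x,y) ∈ [−π,π]² : Re φ(x,y) ≤ −1/10}`. -/
noncomputable def B1 : Set (ℝ × ℝ) :=
  {p | p ∈ Set.Icc (-π) π ×ˢ Set.Icc (-π) π ∧ (phi p).re ≤ -(1 / 10)}

/-- `A₂ = {(x,y) ∈ [−π,π]² : Im φ(x,y) ≥ 1/10}`. -/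
noncomputable def A2 : Set (ℝ × ℝ) :=
  {p | p ∈ Set.Icc (-π) π ×ˢ Set.Icc (-π) π ∧ (phi p).im ≥ 1 / 10}

/-- The path `γ(t) = (2πt, 0)` for `t < 1/2`, `γ(t) = (π, π − 2πt)` for `t ≥ 1/2`. -/
noncomputable def gamma : ℝ → ℝ × ℝ := fun t =>
  if t < 1 / 2 then (2 * π * t, 0) else (π, π - 2 * π * t)

lemma phi_x0_re (x : ℝ) : (phi (x, 0)).re = (2 * Real.cos x + 1) / 3 := by
  simp [phi, mul_comm Complex.I, Complex.exp_mul_I, Complex.cos_ofReal_re]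
  ring

lemma phi_x0_im (x : ℝ) : (phi (x, 0)).im = 2 * Real.sin x / 3 := by
  simp [phi, mul_comm Complex.I, Complex.exp_mul_I, Complex.sin_ofReal_re]
  ring

lemma phi_pi (y : ℝ) : phi (π, y) = -1/3 := by
  simp only [phi]
  rw [mul_add Complex.I, Complex.exp_add, mul_comm Complex.I ((π:ℝ):ℂ), Complex.exp_pi_mul_I]
  ring

lemma x0_mem (x : ℝ) (hx0 : 0 ≤ x) (hxπ : x ≤ π) : ((x, 0) : ℝ × ℝ) ∈ A1 ∪ B1 ∪ A2 := by
  have hpi := pi_pos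
  have hmem : ((x, 0) : ℝ × ℝ) ∈ Set.Icc (-π) π ×ˢ Set.Icc (-π) π := by
    simp only [Set.mem_prod, Set.mem_Icc]
    exact ⟨⟨by linarith, hxπ⟩, by linarith, hpi.le⟩
  by_cases h1 : Real.cos x ≥ -(7/20)
  · left; left
    refine ⟨hmem, ?_⟩
    rw [phi_x0_re]; linarith
  · by_cases h2 : Real.cos x ≤ -(13/20)
    · left; right
      refine ⟨hmem, ?_⟩
      rw [phi_x0_re]; linarith
    · right
      refine ⟨hmem, ?_⟩
      rw [phi_x0_im]
      push_neg at h1 h2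
      have hs : Real.sin x ≥ 0 := Real.sin_nonneg_of_nonneg_of_le_pi hx0 hxπ
      have hsq := Real.sin_sq_add_cos_sq x
      nlinarith [hsq, hs, h1, h2]

/-- `γ` is a path from `(0,0)` to `(π,−π)` staying in `A₁ ∪ B₁ ∪ A₂`. -/
theorem gamma_path_in_A1_B1_A2 :
    gamma 0 = (0, 0) ∧ gamma 1 = (π, -π) ∧
    ContinuousOn gamma (Set.Icc 0 1) ∧
    (∀ t ∈ Set.Icc (0 : ℝ) 1, gamma t ∈ A1 ∪ B1 ∪ A2) := by
  have hpi := pi_pos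
  refine ⟨?_, ?_, ?_, ?_⟩
  · simp only [gamma, if_pos (by norm_num : (0:ℝ) < 1/2)]
    norm_num
  · simp only [gamma, if_neg (by norm_num : ¬(1:ℝ) < 1/2), Prod.mk.injEq]
    exact ⟨trivial, by ring⟩
  · have hg : gamma = fun t : ℝ => if t ≤ 1/2 then ((2*π*t, 0) : ℝ × ℝ) else (π, π - 2*π*t) := by
      funext t
      simp only [gamma]
      rcases lt_trichotomy t (1/2) with h | h | h
      · rw [if_pos h, if_pos h.le]
      · subst h
        rw [if_neg (lt_irrefl _), if_pos le_rfl, Prod.mk.injEq]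
        constructor <;> ring
      · rw [if_neg (not_lt.2 h.le), if_neg (not_le.2 h)]
    rw [hg]
    apply Continuous.continuousOn
    apply Continuous.if_le (by continuity) (by continuity) continuous_id continuous_const
    intro x hx
    simp only [id] at hx
    subst hx
    rw [Prod.mk.injEq]
    constructor <;> ring
  · rintro t ⟨ht0, ht1⟩
    by_cases h : t < 1/2
    · have hgt : gamma t = (2*π*t, 0) := by simp only [gamma, if_pos h]
      rw [hgt]
      exact x0_mem _ (by positivity) (by nlinarith)
    · have hgt : gamma t = (π, π - 2*π*t) := by simp only [gamma, if_neg h]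
      rw [hgt]
      push_neg at h
      left; right
      constructor
      · simp only [Set.mem_prod, Set.mem_Icc]
        exact ⟨⟨by linarith, le_refl π⟩, by nlinarith, by nlinarith⟩
      · rw [show (phi (π, π - 2*π*t)).re = (-1/3 : ℂ).re from by rw [phi_pi]]
        norm_num
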